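/- If γ > 1, λ > 1, and u₀ ∈ L²_loc(ℝ³) is λ-discretely self-similar (λu₀(λx) = u₀(x) a.e.), then u₀ ∈ L²(w_γ dx), and there exist positive constants A and B (depending only on γ and λ) such that A ∫_{1<|x|≤λ} |u₀(x)|² dx ≤ ∫ |u₀(x)|² w_γ(x) dx ≤ B ∫_{1<|x|≤λ} |u₀(x)|² dx. -/

import Mathlib

open MeasureTheory Real ENNReal Set

namespace DSSAux

noncomputable section

local notation "E3" => EuclideanSpace ℝ (Fin 3)

/-- The annulus `Λ^k < ‖x‖ ≤ Λ^(k+1)`. -/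
def ann (Λ : ℝ) (k : ℤ) : Set (EuclideanSpace ℝ (Fin 3)) :=
  {x | Λ ^ k < ‖x‖ ∧ ‖x‖ ≤ Λ ^ (k + 1)}

lemma measurableSet_ann (Λ : ℝ) (k : ℤ) : MeasurableSet (ann Λ k) := by
  have h : ann Λ k = (fun x : E3 => ‖x‖) ⁻¹' Ioc (Λ ^ k) (Λ ^ (k + 1)) := rfl
  rw [h]
  exact measurable_norm measurableSet_Ioc

lemma ann_disjoint {Λ : ℝ} (hΛ : 1 < Λ) : Pairwise (Function.onFun Disjoint (ann Λ)) := by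
  have key : ∀ k l : ℤ, k < l → Disjoint (ann Λ k) (ann Λ l) := by
    intro k l hkl
    refine Set.disjoint_left.mpr fun x hx hx' => ?_
    have h1 : ‖x‖ ≤ Λ ^ (k + 1) := hx.2
    have h2 : Λ ^ l < ‖x‖ := hx'.1
    have h3 : Λ ^ (k + 1) ≤ Λ ^ l := zpow_le_zpow_right₀ hΛ.le (by omega)
    linarith
  intro k l hkl
  rcases lt_or_gt_of_ne hkl with h | h
  · exact key k l h
  · exact (key l k h).symm

lemma ann_iUnion {Λ : ℝ} (hΛ : 1 < Λ) : (⋃ k : ℤ, ann Λ k) = {(0 : E3)}ᶜ := by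
  ext x
  simp only [mem_iUnion, mem_compl_iff, mem_singleton_iff]
  constructor
  · rintro ⟨k, hk, -⟩ rfl
    have : (0 : ℝ) < Λ ^ k := zpow_pos (by linarith) k
    simp only [norm_zero] at hk
    linarith
  · intro hx
    have hx' : 0 < ‖x‖ := norm_pos_iff.mpr hx
    obtain ⟨n, hn⟩ := exists_mem_Ioc_zpow hx' hΛ
    exact ⟨n, hn.1, hn.2⟩

lemma ann_preimage {Λ : ℝ} (hΛ : 0 < Λ) (k : ℤ) :
    (fun x : E3 => Λ • x) ⁻¹' ann Λ (k + 1) = ann Λ k := by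
  ext x
  have hnorm : ‖Λ • x‖ = Λ * ‖x‖ := by
    rw [norm_smul, Real.norm_eq_abs, abs_of_pos hΛ]
  simp only [mem_preimage, ann, mem_setOf_eq, hnorm, zpow_add_one₀ (ne_of_gt hΛ)]
  constructor
  · rintro ⟨h1, h2⟩
    exact ⟨by nlinarith, by nlinarith⟩
  · rintro ⟨h1, h2⟩
    exact ⟨by nlinarith, by nlinarith⟩

lemma map_restrict_ann {Λ : ℝ} (hΛ : 0 < Λ) (k : ℤ) :
    Measure.map (fun x : E3 => Λ • x) (volume.restrict (ann Λ k))
      = ENNReal.ofReal ((Λ ^ 3)⁻¹) • (volume.restrict (ann Λ (k + 1))) := by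
  have hg : Measurable (fun x : E3 => Λ • x) := measurable_id.const_smul Λ
  have h1 := Measure.restrict_map (μ := (volume : Measure E3)) hg
      (measurableSet_ann Λ (k + 1))
  rw [ann_preimage hΛ k] at h1
  rw [← h1, Measure.map_addHaar_smul volume (ne_of_gt hΛ), Measure.restrict_smul]
  congr 1
  rw [finrank_euclideanSpace_fin, abs_of_pos (by positivity)]

lemma smul_ac {α : Type*} [MeasurableSpace α] {μ ν : Measure α} (h : μ ≪ ν) (c : ℝ≥0∞) :
    c • μ ≪ ν := by
  refine Measure.AbsolutelyContinuous.mk fun s _ hs => ?_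
  simp [Measure.smul_apply, h hs]

lemma pow_identity {Λ : ℝ} (hΛ : 0 < Λ) (γ : ℝ) (n : ℕ) :
    (Λ ^ n) ^ (-γ) * Λ ^ n = (Λ ^ (1 - γ)) ^ n := by
  rw [← Real.rpow_natCast Λ n, ← Real.rpow_mul hΛ.le, ← Real.rpow_add hΛ,
    ← Real.rpow_natCast (Λ ^ (1 - γ)) n, ← Real.rpow_mul hΛ.le]
  ring_nf

lemma tsum_bound {γ Λ : ℝ} (hγ : 1 < γ) (hΛ : 1 < Λ) :
    ∑' k : ℤ, ENNReal.ofReal ((1 + Λ ^ k) ^ (-γ)) * (ENNReal.ofReal Λ) ^ k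
      ≤ (1 - ENNReal.ofReal (Λ ^ (1 - γ)))⁻¹ + (1 - (ENNReal.ofReal Λ)⁻¹)⁻¹ := by
  have hΛ0 : (0:ℝ) < Λ := by linarith
  rw [tsum_of_nat_of_neg_add_one ENNReal.summable ENNReal.summable]
  have h1 : ∑' n : ℕ, ENNReal.ofReal ((1 + Λ ^ (n:ℤ)) ^ (-γ)) * (ENNReal.ofReal Λ) ^ (n:ℤ)
      ≤ (1 - ENNReal.ofReal (Λ ^ (1 - γ)))⁻¹ := by
    rw [← ENNReal.tsum_geometric]
    refine ENNReal.tsum_le_tsum fun n => ?_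
    have e1 : (ENNReal.ofReal Λ) ^ (n:ℤ) = ENNReal.ofReal (Λ ^ n) := by
      rw [zpow_natCast, ENNReal.ofReal_pow hΛ0.le]
    rw [e1, ← ENNReal.ofReal_mul (by positivity), ← ENNReal.ofReal_pow (by positivity),
      ← pow_identity hΛ0 γ n]
    refine ENNReal.ofReal_le_ofReal ?_
    have hb : (0:ℝ) < Λ ^ n := by positivity
    have hle : (1 + Λ ^ (n:ℤ)) ^ (-γ) ≤ (Λ ^ n) ^ (-γ) := by
      rw [zpow_natCast]
      exact Real.rpow_le_rpow_of_nonpos hb (by linarith [hb]) (by linarith)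
    exact mul_le_mul_of_nonneg_right hle (by positivity)
  have h2 : ∑' n : ℕ, ENNReal.ofReal ((1 + Λ ^ (-(n:ℤ) - 1)) ^ (-γ)) *
        (ENNReal.ofReal Λ) ^ (-(n:ℤ) - 1)
      ≤ (1 - (ENNReal.ofReal Λ)⁻¹)⁻¹ := by
    rw [← ENNReal.tsum_geometric]
    refine ENNReal.tsum_le_tsum fun n => ?_
    have e1 : (-(n:ℤ) - 1) = Int.negSucc n := by
      rw [Int.negSucc_eq]; ring
    have e2 : (ENNReal.ofReal Λ) ^ (-(n:ℤ) - 1) = ((ENNReal.ofReal Λ)⁻¹) ^ (n + 1) := by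
      rw [e1, zpow_negSucc, ENNReal.inv_pow]
    have e3 : ENNReal.ofReal ((1 + Λ ^ (-(n:ℤ) - 1)) ^ (-γ)) ≤ 1 := by
      rw [ENNReal.ofReal_le_one]
      refine Real.rpow_le_one_of_one_le_of_nonpos ?_ (by linarith)
      have : (0:ℝ) < Λ ^ (-(n:ℤ) - 1) := zpow_pos hΛ0 _
      linarith
    have e4 : ((ENNReal.ofReal Λ)⁻¹) ^ (n + 1) ≤ ((ENNReal.ofReal Λ)⁻¹) ^ n := by
      rw [pow_succ]
      calc ((ENNReal.ofReal Λ)⁻¹) ^ n * (ENNReal.ofReal Λ)⁻¹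
          ≤ ((ENNReal.ofReal Λ)⁻¹) ^ n * 1 := by
            refine mul_le_mul_right ?_ _
            rw [ENNReal.inv_le_one]
            exact le_trans (by norm_num) (ENNReal.one_le_ofReal.mpr hΛ.le)
        _ = ((ENNReal.ofReal Λ)⁻¹) ^ n := mul_one _
    calc ENNReal.ofReal ((1 + Λ ^ (-(n:ℤ) - 1)) ^ (-γ)) * (ENNReal.ofReal Λ) ^ (-(n:ℤ) - 1)
        ≤ 1 * ((ENNReal.ofReal Λ)⁻¹) ^ (n + 1) := by
          rw [e2]; exact mul_le_mul_left e3 _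
      _ = ((ENNReal.ofReal Λ)⁻¹) ^ (n + 1) := one_mul _
      _ ≤ ((ENNReal.ofReal Λ)⁻¹) ^ n := e4
  refine add_le_add h1 (le_trans (le_of_eq ?_) h2)
  congr 1
  ext n
  congr 2 <;> ring_nf

end

end DSSAux

open DSSAux

/-- If `γ > 1`, `λ > 1` and `u₀ ∈ L²_loc(ℝ³)` is λ-discretely self-similar
(`u₀(x) = λ u₀(λx)` a.e.), then `u₀ ∈ L²(w_γ dx)` and for constants `A, B > 0` depending
only on `γ` and `λ`:
`A ∫_{1<|x|≤λ} |u₀|² dx ≤ ∫ |u₀|² w_γ dx ≤ B ∫_{1<|x|≤λ} |u₀|² dx`. -/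
theorem dss_mem_weighted_L2 (γ Λ : ℝ) (hγ : 1 < γ) (hΛ : 1 < Λ) :
    ∃ A B : ℝ, 0 < A ∧ 0 < B ∧
      ∀ u₀ : EuclideanSpace ℝ (Fin 3) → EuclideanSpace ℝ (Fin 3),
        AEStronglyMeasurable u₀ volume →
        LocallyIntegrable (fun x => ‖u₀ x‖ ^ 2) volume →
        (∀ᵐ x ∂(volume : Measure (EuclideanSpace ℝ (Fin 3))), u₀ x = Λ • u₀ (Λ • x)) →
        MemLp u₀ 2 (volume.withDensity fun x => ENNReal.ofReal ((1 + ‖x‖) ^ (-γ))) ∧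
        A * ∫ x in {x : EuclideanSpace ℝ (Fin 3) | 1 < ‖x‖ ∧ ‖x‖ ≤ Λ}, ‖u₀ x‖ ^ 2
          ≤ ∫ x, ‖u₀ x‖ ^ 2 * (1 + ‖x‖) ^ (-γ) ∧
        ∫ x, ‖u₀ x‖ ^ 2 * (1 + ‖x‖) ^ (-γ)
          ≤ B * ∫ x in {x : EuclideanSpace ℝ (Fin 3) | 1 < ‖x‖ ∧ ‖x‖ ≤ Λ}, ‖u₀ x‖ ^ 2 := by
  have hΛ0 : (0:ℝ) < Λ := by linarith
  set c : ℝ≥0∞ := ENNReal.ofReal Λ with hc_def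
  have hc0 : c ≠ 0 := by
    simp only [hc_def, Ne, ENNReal.ofReal_eq_zero, not_le]; exact hΛ0
  have hctop : c ≠ ⊤ := ENNReal.ofReal_ne_top
  set Ctop : ℝ≥0∞ := (1 - ENNReal.ofReal (Λ ^ (1 - γ)))⁻¹ + (1 - c⁻¹)⁻¹ with hCtop_def
  have hr1 : ENNReal.ofReal (Λ ^ (1 - γ)) < 1 := by
    rw [ENNReal.ofReal_lt_one]
    exact Real.rpow_lt_one_of_one_lt_of_neg hΛ (by linarith)
  have hr2 : c⁻¹ < 1 := by
    rw [ENNReal.inv_lt_one]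
    exact ENNReal.one_lt_ofReal.mpr hΛ
  have hCtop_ne : Ctop ≠ ⊤ := by
    rw [hCtop_def]
    refine ENNReal.add_ne_top.mpr ⟨ENNReal.inv_ne_top.mpr ?_, ENNReal.inv_ne_top.mpr ?_⟩
    · intro h
      exact absurd (tsub_eq_zero_iff_le.mp h) (not_le.mpr hr1)
    · intro h
      exact absurd (tsub_eq_zero_iff_le.mp h) (not_le.mpr hr2)
  refine ⟨(1 + Λ) ^ (-γ), Ctop.toReal + 1, Real.rpow_pos_of_pos (by linarith) _,
    by positivity, fun u₀ hm hloc hdss => ?_⟩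
  -- measurability facts
  have hu2 : AEStronglyMeasurable (fun x : EuclideanSpace ℝ (Fin 3) => ‖u₀ x‖ ^ 2)
      (volume : Measure (EuclideanSpace ℝ (Fin 3))) := by
    exact (continuous_pow 2).comp_aestronglyMeasurable hm.norm
  have hf : AEMeasurable (fun x : EuclideanSpace ℝ (Fin 3) => ENNReal.ofReal (‖u₀ x‖ ^ 2))
      (volume : Measure (EuclideanSpace ℝ (Fin 3))) := hu2.aemeasurable.ennreal_ofReal
  have hw_cont : Continuous (fun x : EuclideanSpace ℝ (Fin 3) => (1 + ‖x‖) ^ (-γ)) := by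
    refine Continuous.rpow_const (continuous_const.add continuous_norm) fun x => Or.inl ?_
    positivity
  have hw_meas : Measurable (fun x : EuclideanSpace ℝ (Fin 3) =>
      ENNReal.ofReal ((1 + ‖x‖) ^ (-γ))) := hw_cont.measurable.ennreal_ofReal
  -- the DSS identity at the level of squared norms
  have hfd : ∀ᵐ x ∂(volume : Measure (EuclideanSpace ℝ (Fin 3))),
      ENNReal.ofReal (‖u₀ x‖ ^ 2)
        = ENNReal.ofReal (Λ ^ 2) * ENNReal.ofReal (‖u₀ (Λ • x)‖ ^ 2) := by
    filter_upwards [hdss] with x hx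
    rw [← ENNReal.ofReal_mul (by positivity)]
    congr 1
    rw [hx, norm_smul, Real.norm_eq_abs, abs_of_pos hΛ0]
    ring
  -- the step recursion for J
  set J : ℤ → ℝ≥0∞ := fun k => ∫⁻ x in ann Λ k, ENNReal.ofReal (‖u₀ x‖ ^ 2) with hJ_def
  have hstep : ∀ k : ℤ, J (k + 1) = c * J k := by
    intro k
    have hmap : AEMeasurable (fun x : EuclideanSpace ℝ (Fin 3) => ENNReal.ofReal (‖u₀ x‖ ^ 2))
        (Measure.map (fun x : EuclideanSpace ℝ (Fin 3) => Λ • x)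
          (volume.restrict (ann Λ k))) := by
      refine hf.mono_ac ?_
      rw [map_restrict_ann hΛ0 k]
      exact smul_ac Measure.restrict_le_self.absolutelyContinuous _
    have h1 : J k = ENNReal.ofReal (Λ ^ 2) * (ENNReal.ofReal ((Λ ^ 3)⁻¹) * J (k + 1)) := by
      calc J k = ∫⁻ x in ann Λ k,
          ENNReal.ofReal (Λ ^ 2) * ENNReal.ofReal (‖u₀ (Λ • x)‖ ^ 2) :=
            lintegral_congr_ae (ae_restrict_of_ae hfd)
        _ = ENNReal.ofReal (Λ ^ 2) *
            ∫⁻ x in ann Λ k, ENNReal.ofReal (‖u₀ (Λ • x)‖ ^ 2) :=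
            lintegral_const_mul' _ _ ENNReal.ofReal_ne_top
        _ = ENNReal.ofReal (Λ ^ 2) * ∫⁻ y, ENNReal.ofReal (‖u₀ y‖ ^ 2)
              ∂(Measure.map (fun x : EuclideanSpace ℝ (Fin 3) => Λ • x)
                (volume.restrict (ann Λ k))) := by
            rw [lintegral_map' hmap ((measurable_id.const_smul Λ).aemeasurable)]
        _ = ENNReal.ofReal (Λ ^ 2) * (ENNReal.ofReal ((Λ ^ 3)⁻¹) * J (k + 1)) := by
            rw [map_restrict_ann hΛ0 k, lintegral_smul_measure, smul_eq_mul]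
    have hcc : c * (ENNReal.ofReal (Λ ^ 2) * ENNReal.ofReal ((Λ ^ 3)⁻¹)) = 1 := by
      rw [hc_def, ← ENNReal.ofReal_mul (by positivity), ← ENNReal.ofReal_mul hΛ0.le]
      rw [show Λ * (Λ ^ 2 * (Λ ^ 3)⁻¹) = 1 by field_simp]
      exact ENNReal.ofReal_one
    calc J (k + 1) = 1 * J (k + 1) := (one_mul _).symm
      _ = c * (ENNReal.ofReal (Λ ^ 2) * ENNReal.ofReal ((Λ ^ 3)⁻¹)) * J (k + 1) := by
          rw [hcc]
      _ = c * (ENNReal.ofReal (Λ ^ 2) * (ENNReal.ofReal ((Λ ^ 3)⁻¹) * J (k + 1))) := by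
          ring
      _ = c * J k := by rw [← h1]
  -- closed form for J
  have hJk : ∀ k : ℤ, J k = c ^ k * J 0 := by
    intro k
    induction k using Int.induction_on with
    | zero => simp
    | succ n ih =>
        rw [hstep n, ih, ← mul_assoc]
        congr 1
        rw [ENNReal.zpow_add hc0 hctop n 1, zpow_one, mul_comm]
    | pred n ih =>
        have h := hstep (-(n:ℤ) - 1)
        rw [show (-(n:ℤ) - 1 + 1) = -(n:ℤ) by ring] at h
        have : J (-(n:ℤ) - 1) = c⁻¹ * J (-(n:ℤ)) := by
          rw [h, ← mul_assoc, ENNReal.inv_mul_cancel hc0 hctop, one_mul]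
        rw [this, ih, ← mul_assoc]
        congr 1
        rw [show (-(n:ℤ) - 1) = -1 + -(n:ℤ) by ring,
          ENNReal.zpow_add hc0 hctop (-1) (-(n:ℤ)), zpow_neg_one]
  -- finiteness of J 0
  have hJ0_int : IntegrableOn (fun x => ‖u₀ x‖ ^ 2) (ann Λ 0) volume := by
    refine (hloc.integrableOn_isCompact
      (isCompact_closedBall (0 : EuclideanSpace ℝ (Fin 3)) Λ)).mono_set fun x hx => ?_
    rw [mem_closedBall_zero_iff]
    have h := hx.2
    simpa using h
  have hJ0_top : J 0 < ⊤ := hJ0_int.lintegral_lt_top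
  -- per-annulus upper bound
  have hupper : ∀ k : ℤ, (∫⁻ x in ann Λ k,
      ENNReal.ofReal (‖u₀ x‖ ^ 2) * ENNReal.ofReal ((1 + ‖x‖) ^ (-γ)))
      ≤ ENNReal.ofReal ((1 + Λ ^ k) ^ (-γ)) * c ^ k * J 0 := by
    intro k
    have hb : ∀ᵐ x ∂(volume.restrict (ann Λ k)),
        ENNReal.ofReal (‖u₀ x‖ ^ 2) * ENNReal.ofReal ((1 + ‖x‖) ^ (-γ))
          ≤ ENNReal.ofReal ((1 + Λ ^ k) ^ (-γ)) * ENNReal.ofReal (‖u₀ x‖ ^ 2) := by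
      filter_upwards [ae_restrict_mem (measurableSet_ann Λ k)] with x hx
      have hbpos : (0:ℝ) < Λ ^ k := zpow_pos hΛ0 k
      have h1 : (1 + ‖x‖) ^ (-γ) ≤ (1 + Λ ^ k) ^ (-γ) :=
        Real.rpow_le_rpow_of_nonpos (by positivity) (by linarith [hx.1]) (by linarith)
      rw [mul_comm]
      exact mul_le_mul_left (ENNReal.ofReal_le_ofReal h1) _
    calc (∫⁻ x in ann Λ k,
        ENNReal.ofReal (‖u₀ x‖ ^ 2) * ENNReal.ofReal ((1 + ‖x‖) ^ (-γ)))
        ≤ ∫⁻ x in ann Λ k,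
          ENNReal.ofReal ((1 + Λ ^ k) ^ (-γ)) * ENNReal.ofReal (‖u₀ x‖ ^ 2) :=
          lintegral_mono_ae hb
      _ = ENNReal.ofReal ((1 + Λ ^ k) ^ (-γ)) * J k :=
          lintegral_const_mul' _ _ ENNReal.ofReal_ne_top
      _ = ENNReal.ofReal ((1 + Λ ^ k) ^ (-γ)) * c ^ k * J 0 := by
          rw [hJk k, mul_assoc]
  -- decomposition of the total integral
  set L : ℝ≥0∞ := ∫⁻ x, ENNReal.ofReal (‖u₀ x‖ ^ 2) * ENNReal.ofReal ((1 + ‖x‖) ^ (-γ))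
    with hL_def
  have hL : L = ∑' k : ℤ, ∫⁻ x in ann Λ k,
      ENNReal.ofReal (‖u₀ x‖ ^ 2) * ENNReal.ofReal ((1 + ‖x‖) ^ (-γ)) := by
    rw [hL_def, ← lintegral_add_compl
      (fun x => ENNReal.ofReal (‖u₀ x‖ ^ 2) * ENNReal.ofReal ((1 + ‖x‖) ^ (-γ)))
      (measurableSet_singleton (0 : EuclideanSpace ℝ (Fin 3))),
      setLIntegral_measure_zero _ _ (measure_singleton _), zero_add, ← ann_iUnion hΛ,
      lintegral_iUnion (measurableSet_ann Λ) (ann_disjoint hΛ)]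
  -- total upper bound
  have hLle : L ≤ Ctop * J 0 := by
    rw [hL]
    calc (∑' k : ℤ, ∫⁻ x in ann Λ k,
        ENNReal.ofReal (‖u₀ x‖ ^ 2) * ENNReal.ofReal ((1 + ‖x‖) ^ (-γ)))
        ≤ ∑' k : ℤ, ENNReal.ofReal ((1 + Λ ^ k) ^ (-γ)) * c ^ k * J 0 :=
          ENNReal.tsum_le_tsum hupper
      _ = (∑' k : ℤ, ENNReal.ofReal ((1 + Λ ^ k) ^ (-γ)) * c ^ k) * J 0 :=
          ENNReal.tsum_mul_right
      _ ≤ Ctop * J 0 := mul_le_mul_left (tsum_bound hγ hΛ) _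
  have hLtop : L ≠ ⊤ :=
    (lt_of_le_of_lt hLle (ENNReal.mul_lt_top hCtop_ne.lt_top hJ0_top)).ne
  -- total lower bound
  have hlow : ENNReal.ofReal ((1 + Λ) ^ (-γ)) * J 0 ≤ L := by
    have hb : ∀ᵐ x ∂(volume.restrict (ann Λ 0)),
        ENNReal.ofReal ((1 + Λ) ^ (-γ)) * ENNReal.ofReal (‖u₀ x‖ ^ 2)
          ≤ ENNReal.ofReal (‖u₀ x‖ ^ 2) * ENNReal.ofReal ((1 + ‖x‖) ^ (-γ)) := by
      filter_upwards [ae_restrict_mem (measurableSet_ann Λ 0)] with x hx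
      have hx2 : ‖x‖ ≤ Λ := by
        have := hx.2; simpa using this
      have h1 : (1 + Λ) ^ (-γ) ≤ (1 + ‖x‖) ^ (-γ) :=
        Real.rpow_le_rpow_of_nonpos (by positivity) (by linarith) (by linarith)
      rw [mul_comm]
      exact mul_le_mul_right (ENNReal.ofReal_le_ofReal h1) _
    calc ENNReal.ofReal ((1 + Λ) ^ (-γ)) * J 0
        = ∫⁻ x in ann Λ 0, ENNReal.ofReal ((1 + Λ) ^ (-γ)) * ENNReal.ofReal (‖u₀ x‖ ^ 2) :=
          (lintegral_const_mul' _ _ ENNReal.ofReal_ne_top).symm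
      _ ≤ ∫⁻ x in ann Λ 0,
            ENNReal.ofReal (‖u₀ x‖ ^ 2) * ENNReal.ofReal ((1 + ‖x‖) ^ (-γ)) :=
          lintegral_mono_ae hb
      _ ≤ L := setLIntegral_le_lintegral _ _
  -- identification of the set
  have hSeq : {x : EuclideanSpace ℝ (Fin 3) | 1 < ‖x‖ ∧ ‖x‖ ≤ Λ} = ann Λ 0 := by
    ext x
    simp [ann]
  -- identification of the two Bochner integrals
  have hI1 : ∫ x in {x : EuclideanSpace ℝ (Fin 3) | 1 < ‖x‖ ∧ ‖x‖ ≤ Λ}, ‖u₀ x‖ ^ 2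
      = (J 0).toReal := by
    rw [hSeq, integral_eq_lintegral_of_nonneg_ae
      (Filter.Eventually.of_forall fun x => by positivity) hu2.restrict]
  have hmul_aesm : AEStronglyMeasurable
      (fun x : EuclideanSpace ℝ (Fin 3) => ‖u₀ x‖ ^ 2 * (1 + ‖x‖) ^ (-γ))
      (volume : Measure (EuclideanSpace ℝ (Fin 3))) :=
    hu2.mul hw_cont.aestronglyMeasurable
  have hI2 : ∫ x, ‖u₀ x‖ ^ 2 * (1 + ‖x‖) ^ (-γ) = L.toReal := by
    rw [integral_eq_lintegral_of_nonneg_ae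
      (Filter.Eventually.of_forall fun x => by positivity) hmul_aesm, hL_def]
    congr 1
    exact lintegral_congr fun x => ENNReal.ofReal_mul (by positivity)
  refine ⟨?_, ?_, ?_⟩
  · -- Memℒp
    constructor
    · exact hm.mono_ac (withDensity_absolutelyContinuous _ _)
    · rw [eLpNorm_lt_top_iff_lintegral_rpow_enorm_lt_top (by norm_num) (by norm_num),
        lintegral_withDensity_eq_lintegral_mul_non_measurable _ hw_meas
          (Filter.Eventually.of_forall fun x => ENNReal.ofReal_lt_top)]
      have heq : ∀ x : EuclideanSpace ℝ (Fin 3),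
          ENNReal.ofReal ((1 + ‖x‖) ^ (-γ)) * (‖u₀ x‖₊ : ℝ≥0∞) ^ (2 : ℝ≥0∞).toReal
            = ENNReal.ofReal (‖u₀ x‖ ^ 2) * ENNReal.ofReal ((1 + ‖x‖) ^ (-γ)) := by
        intro x
        rw [mul_comm]
        congr 1
        rw [ENNReal.toReal_ofNat, ← (by exact ofReal_norm (u₀ x) : ENNReal.ofReal ‖u₀ x‖ = (‖u₀ x‖₊ : ℝ≥0∞)),
          ENNReal.ofReal_rpow_of_nonneg (norm_nonneg _) (by norm_num : (0:ℝ) ≤ 2),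
          Real.rpow_two]
      calc (∫⁻ x, ENNReal.ofReal ((1 + ‖x‖) ^ (-γ)) *
            (‖u₀ x‖₊ : ℝ≥0∞) ^ (2 : ℝ≥0∞).toReal)
          = L := by rw [hL_def]; exact lintegral_congr heq
        _ < ⊤ := hLtop.lt_top
  · -- lower bound
    rw [hI1, hI2]
    have h := ENNReal.toReal_mono hLtop hlow
    rwa [ENNReal.toReal_mul, ENNReal.toReal_ofReal (Real.rpow_nonneg (by positivity) _)] at h
  · -- upper bound
    rw [hI1, hI2]
    have h := ENNReal.toReal_mono (ENNReal.mul_lt_top hCtop_ne.lt_top hJ0_top).ne hLle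
    rw [ENNReal.toReal_mul] at h
    refine h.trans ?_
    have h0 : (0:ℝ) ≤ (J 0).toReal := ENNReal.toReal_nonneg
    nlinarith [ENNReal.toReal_nonneg (a := Ctop)]
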